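/- Let q be a queue (a subset of {1,...,n}) and u a word of length n on the positive integers. The word q(u) produced by the two-phase queue algorithm does not depend on the choice of ordering permutation (i_1,...,i_n), as long as u_{i_1} ≤ u_{i_2} ≤ ... ≤ u_{i_n} holds. -/

import Mathlib

open scoped BigOperators Classical

namespace MLQ

/-- Words of length `n` over the positive integers (letters are natural numbers,
with `0` unused). Sites are elements of `Fin n`, thought of cyclically. -/
abbrev Word (n : ℕ) := Fin n → ℕ

variable {n : ℕ}

section Cyclic

variable [NeZero n]

/-- the site `s` steps (cyclically) to the right of `i` -/
def shiftR (i : Fin n) (s : ℕ) : Fin n :=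
  ⟨(i.val + s) % n, Nat.mod_lt _ (Nat.pos_of_ne_zero (NeZero.ne n))⟩

/-- the site `s` steps (cyclically) to the left of `i` -/
def shiftL (i : Fin n) (s : ℕ) : Fin n :=
  ⟨(i.val + n - s % n) % n, Nat.mod_lt _ (Nat.pos_of_ne_zero (NeZero.ne n))⟩

/-- number of steps to go (cyclically) right from `i` to `j` -/
def cdistR (i j : Fin n) : ℕ := (j.val + n - i.val) % n

/-- number of steps to go (cyclically) left from `i` to `j` -/
def cdistL (i j : Fin n) : ℕ := (i.val + n - j.val) % n

/-- first site of `s` weakly to the right (cyclically) of `i` -/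
noncomputable def firstRight (i : Fin n) (s : Finset (Fin n)) (h : s.Nonempty) : Fin n :=
  shiftR i ((s.image (cdistR i)).min' (h.image _))

/-- first site of `s` weakly to the left (cyclically) of `i` -/
noncomputable def firstLeft (i : Fin n) (s : Finset (Fin n)) (h : s.Nonempty) : Fin n :=
  shiftL i ((s.image (cdistL i)).min' (h.image _))

/-- One step of Phase II of the queue algorithm: the state consists of the set of
still-unset sites of the queue together with the partial output word; processing
the letter at site `σ p`, it is placed (unchanged) on the first unset queue site
weakly to the right of `σ p`. -/
noncomputable def step2 (u : Word n) (σ : Equiv.Perm (Fin n))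
    (st : Finset (Fin n) × Word n) (p : Fin n) : Finset (Fin n) × Word n :=
  if h : st.1.Nonempty then
    let j := firstRight (σ p) st.1 h
    (st.1.erase j, Function.update st.2 j (u (σ p)))
  else st

/-- One step of Phase I of the queue algorithm: processing the letter at site `σ p`,
the letter `u (σ p) + 1` is placed on the first unset non-queue site weakly to the
left of `σ p`. -/
noncomputable def step1 (u : Word n) (σ : Equiv.Perm (Fin n))
    (st : Finset (Fin n) × Word n) (p : Fin n) : Finset (Fin n) × Word n :=
  if h : st.1.Nonempty then
    let j := firstLeft (σ p) st.1 h
    (st.1.erase j, Function.update st.2 j (u (σ p) + 1))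
  else st

/-- The two-phase queue algorithm computing `q(u)`, using the ordering permutation `σ`
(so the letters are processed in the order `u (σ 0), u (σ 1), …`): Phase II processes
the `|q|` smallest letters in increasing order, Phase I processes the remaining
letters in decreasing order. -/
noncomputable def queueActWith (q : Finset (Fin n)) (σ : Equiv.Perm (Fin n))
    (u : Word n) : Word n :=
  let s2 := ((List.finRange n).take q.card).foldl (step2 u σ) (q, fun _ => 0)
  let s1 := (((List.finRange n).drop q.card).reverse).foldl (step1 u σ) (qᶜ, s2.2)
  s1.2

/-- `σ` is a valid ordering permutation for the word `u`. -/
def IsSorting (u : Word n) (σ : Equiv.Perm (Fin n)) : Prop := Monotone (u ∘ σ)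

/-- The action `q(u)` of a queue `q` on a word `u`, using the canonical sorting
permutation. -/
noncomputable def act (q : Finset (Fin n)) (u : Word n) : Word n :=
  queueActWith q (Tuple.sort u) u

/-- The action of a tuple of queues `(q_1, …, q_k)` on a word (first `q_1`, then `q_2`, …). -/
noncomputable def mlqAct {k : ℕ} (qs : Fin k → Finset (Fin n)) (u : Word n) : Word n :=
  (List.ofFn qs).foldl (fun w q => act q w) u

end Cyclic

/-- the type of a word: `typeOf u i` is the number of occurrences of the letter `i`. -/
def typeOf (u : Word n) : ℕ → ℕ := fun i => (Finset.univ.filter (fun p => u p = i)).card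

/-- partial sums `p_i(m) = m_1 + ⋯ + m_i` of a type -/
def psum (m : ℕ → ℕ) (i : ℕ) : ℕ := ∑ j ∈ Finset.Icc 1 i, m j

/-- number of classes of a type: the largest `i` with `m i ≠ 0` -/
noncomputable def classes (m : ℕ → ℕ) : ℕ := sSup {i | m i ≠ 0}

/-- a packed word: all classes `1, …, ℓ` occur, where `ℓ` is the number of classes -/
def PackedWord (u : Word n) : Prop :=
  (∀ p, 1 ≤ u p) ∧ ∀ j, 1 ≤ j → j ≤ classes (typeOf u) → typeOf u j ≠ 0

/-- merging classes `i` and `i+1` in a word: all letters `> i` are decremented -/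
def mergeWord (i : ℕ) (u : Word n) : Word n := fun p => if i < u p then u p - 1 else u p

/-- merging classes `i` and `i+1` in a type -/
def mergeType (i : ℕ) (m : ℕ → ℕ) : ℕ → ℕ := fun j =>
  if j < i then m j else if j = i then m i + m (i + 1) else m (j + 1)

/-- `∨^(k)`: decrement all but the `k` smallest letters of a word (meaningful when
`k` is a partial sum of the type of the word). -/
def vee (k : ℕ) (u : Word n) : Word n := fun p =>
  if (Finset.univ.filter (fun q => u q ≤ u p)).card ≤ k then u p else u p - 1

/-- iterated merge `∨_T` (the merges `∨_t` are applied for `t ∈ T` in decreasing order) -/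
def mergeWordT (T : Finset ℕ) (u : Word n) : Word n :=
  (T.sort (· ≤ ·)).foldr mergeWord u

/-- iterated merge `∨_T` on types -/
def mergeTypeT (T : Finset ℕ) (m : ℕ → ℕ) : ℕ → ℕ :=
  (T.sort (· ≤ ·)).foldr mergeType m

/-- the weight of a queue, `∏_{j ∈ q} x_j` -/
noncomputable def qwt (q : Finset (Fin n)) : MvPolynomial (Fin n) ℤ :=
  ∏ j ∈ q, MvPolynomial.X j

/-- the `σ`-twisted spectral weight `⟨u⟩_σ` of a word `u`, with respect to a type `m`
with `k + 1` classes: the sum of the weights of all `σ`-twisted multiline queues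
`(q_1, …, q_k)` of type `m` (i.e. `|q_i| = p_{σ(i)}(m)`) with `u = q(1^n)`. -/
noncomputable def swt [NeZero n] (k : ℕ) (m : ℕ → ℕ) (σ : Equiv.Perm (Fin k))
    (u : Word n) : MvPolynomial (Fin n) ℤ :=
  ∑ qs ∈ Finset.univ.filter (fun qs : Fin k → Finset (Fin n) =>
      (∀ i, (qs i).card = psum m ((σ i : ℕ) + 1)) ∧ mlqAct qs (fun _ => 1) = u),
    ∏ i, qwt (qs i)

/-- the (ordinary) spectral weight `⟨u⟩` of a packed word -/
noncomputable def spec [NeZero n] (u : Word n) : MvPolynomial (Fin n) ℤ :=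
  swt (classes (typeOf u) - 1) (typeOf u) (Equiv.refl _) u

/-- the elementary symmetric polynomial `e_k(x_1, …, x_n)` -/
noncomputable def esym (n k : ℕ) : MvPolynomial (Fin n) ℤ :=
  ∑ t ∈ Finset.powersetCard k (Finset.univ : Finset (Fin n)), ∏ j ∈ t, MvPolynomial.X j

/-- the Gale order `A ⪰ B`: same cardinality, and the `k`-th largest element of `A`
is at least the `k`-th largest element of `B`, for every `k` -/
def Dom (A B : Finset ℕ) : Prop :=
  A.card = B.card ∧ ∀ k < A.card,
    (B.sort (· ≤ ·)).reverse.getD k 0 ≤ (A.sort (· ≤ ·)).reverse.getD k 0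

/-- `A ≫ B`: every element of `A` exceeds every element of `B` -/
def Gg (A B : Finset ℕ) : Prop := ∀ a ∈ A, ∀ b ∈ B, b < a

/-- a word is weakly decreasing up to level `t`: any two sites `p < q` with
`u q ≤ t` satisfy `u p ≥ u q` -/
def WDUpTo (t : ℕ) (u : Word n) : Prop :=
  ∀ p q : Fin n, p < q → u q ≤ t → u q ≤ u p

section Dual

variable [NeZero n]

/-- the cyclic interval `{i, i+1, …, i+t}` -/
def cycInterval (i : Fin n) (t : ℕ) : Finset (Fin n) :=
  (Finset.range (t + 1)).image (shiftR i)

/-- the cyclic interval starting at `i` of length `t` is balanced for the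
configuration `(q₁, q₂)` -/
def BalancedInterval (q1 q2 : Finset (Fin n)) (i : Fin n) (t : ℕ) : Prop :=
  (cycInterval i t ∩ q1).card = (cycInterval i t ∩ q2).card ∧
  ∀ l ≤ t, (cycInterval i l ∩ q2).card ≤ (cycInterval i l ∩ q1).card

/-- a site is balanced if it lies in some balanced interval; equivalently, its
parenthesis (if any) is matched in the cyclic parenthesis-matching of the
configuration -/
def BalancedSite (q1 q2 : Finset (Fin n)) (j : Fin n) : Prop :=
  ∃ i t, t < n ∧ BalancedInterval q1 q2 i t ∧ j ∈ cycInterval i t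

/-- the dual configuration: balanced sites keep their memberships, unbalanced
sites swap their memberships between the two queues -/
noncomputable def dualPair (q1 q2 : Finset (Fin n)) : Finset (Fin n) × Finset (Fin n) :=
  (Finset.univ.filter (fun j => if BalancedSite q1 q2 j then j ∈ q1 else j ∈ q2),
   Finset.univ.filter (fun j => if BalancedSite q1 q2 j then j ∈ q2 else j ∈ q1))

/-- the operator `s_i` on tuples of queues, replacing the (0-indexed) adjacent pair
`(q_i, q_{i+1})` by its dual configuration -/
noncomputable def sOp {k : ℕ} (i : ℕ) (qs : Fin k → Finset (Fin n)) :
    Fin k → Finset (Fin n) := fun j =>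
  if h : i + 1 < k then
    (if j.val = i then (dualPair (qs ⟨i, by omega⟩) (qs ⟨i + 1, h⟩)).1
     else if j.val = i + 1 then (dualPair (qs ⟨i, by omega⟩) (qs ⟨i + 1, h⟩)).2
     else qs j)
  else qs j

end Dual



/-! ### Auxiliary development for the order-independence theorem -/

section OrderIndependent

variable [NeZero n]

private lemma mod_sub_helper {a b : ℕ} (ha : a < n) (hb : b < n) :
    (b + n - a) % n = if a ≤ b then b - a else b + n - a := by
  split
  · next h =>
    have h1 : b + n - a = (b - a) + n := by omega
    rw [h1, Nat.add_mod_right, Nat.mod_eq_of_lt (by omega)]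
  · next h => exact Nat.mod_eq_of_lt (by omega)

lemma cdistR_eq (i j : Fin n) :
    cdistR i j = if i.val ≤ j.val then j.val - i.val else j.val + n - i.val :=
  mod_sub_helper i.isLt j.isLt

lemma cdistL_eq (i j : Fin n) :
    cdistL i j = if j.val ≤ i.val then i.val - j.val else i.val + n - j.val :=
  mod_sub_helper j.isLt i.isLt

lemma cdistR_lt (i j : Fin n) : cdistR i j < n := by
  have := i.isLt; have := j.isLt
  rw [cdistR_eq]; split <;> omega

lemma cdistL_lt (i j : Fin n) : cdistL i j < n := by
  have := i.isLt; have := j.isLt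
  rw [cdistL_eq]; split <;> omega

lemma shiftR_cdistR (i j : Fin n) : shiftR i (cdistR i j) = j := by
  have hi := i.isLt; have hj := j.isLt
  apply Fin.ext
  show (i.val + cdistR i j) % n = j.val
  rw [cdistR_eq]
  split
  · next h =>
    have h1 : i.val + (j.val - i.val) = j.val := by omega
    rw [h1, Nat.mod_eq_of_lt hj]
  · next h =>
    have h1 : i.val + (j.val + n - i.val) = j.val + n := by omega
    rw [h1, Nat.add_mod_right, Nat.mod_eq_of_lt hj]

lemma shiftL_cdistL (i j : Fin n) : shiftL i (cdistL i j) = j := by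
  have hi := i.isLt; have hj := j.isLt
  apply Fin.ext
  show (i.val + n - (cdistL i j) % n) % n = j.val
  rw [Nat.mod_eq_of_lt (cdistL_lt i j), cdistL_eq]
  split
  · next h =>
    have h1 : i.val + n - (i.val - j.val) = n + j.val := by omega
    rw [h1, Nat.add_mod_left, Nat.mod_eq_of_lt hj]
  · next h =>
    have h1 : i.val + n - (i.val + n - j.val) = j.val := by omega
    rw [h1, Nat.mod_eq_of_lt hj]

lemma cdistR_inj (i : Fin n) {j j' : Fin n} (h : cdistR i j = cdistR i j') : j = j' := by
  have h1 := shiftR_cdistR i j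
  rw [h, shiftR_cdistR i j'] at h1
  exact h1.symm

lemma cdistL_inj (i : Fin n) {j j' : Fin n} (h : cdistL i j = cdistL i j') : j = j' := by
  have h1 := shiftL_cdistL i j
  rw [h, shiftL_cdistL i j'] at h1
  exact h1.symm

lemma cdistR_add {x j s : Fin n} (hne : s ≠ j) (hle : cdistR x j ≤ cdistR x s) :
    cdistR x s = cdistR x j + cdistR j s := by
  have hvne : s.val ≠ j.val := fun h => hne (Fin.ext h)
  have h1 := x.isLt; have h2 := j.isLt; have h3 := s.isLt
  rw [cdistR_eq] at hle ⊢
  rw [cdistR_eq] at hle ⊢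
  rw [cdistR_eq]
  split_ifs at hle ⊢ <;> omega

lemma cdistL_add {x j s : Fin n} (hne : s ≠ j) (hle : cdistL x j ≤ cdistL x s) :
    cdistL x s = cdistL x j + cdistL j s := by
  have hvne : s.val ≠ j.val := fun h => hne (Fin.ext h)
  have h1 := x.isLt; have h2 := j.isLt; have h3 := s.isLt
  rw [cdistL_eq] at hle ⊢
  rw [cdistL_eq] at hle ⊢
  rw [cdistL_eq]
  split_ifs at hle ⊢ <;> omega

lemma firstRight_spec (i : Fin n) (S : Finset (Fin n)) (h : S.Nonempty) :
    firstRight i S h ∈ S ∧ ∀ j ∈ S, cdistR i (firstRight i S h) ≤ cdistR i j := by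
  obtain ⟨j0, hj0, hm⟩ := Finset.mem_image.mp (Finset.min'_mem (S.image (cdistR i)) (h.image _))
  have he : firstRight i S h = j0 := by
    unfold firstRight
    rw [← hm, shiftR_cdistR]
  rw [he]
  exact ⟨hj0, fun j hj => by
    rw [hm]; exact Finset.min'_le _ _ (Finset.mem_image_of_mem _ hj)⟩

lemma firstLeft_spec (i : Fin n) (S : Finset (Fin n)) (h : S.Nonempty) :
    firstLeft i S h ∈ S ∧ ∀ j ∈ S, cdistL i (firstLeft i S h) ≤ cdistL i j := by
  obtain ⟨j0, hj0, hm⟩ := Finset.mem_image.mp (Finset.min'_mem (S.image (cdistL i)) (h.image _))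
  have he : firstLeft i S h = j0 := by
    unfold firstLeft
    rw [← hm, shiftL_cdistL]
  rw [he]
  exact ⟨hj0, fun j hj => by
    rw [hm]; exact Finset.min'_le _ _ (Finset.mem_image_of_mem _ hj)⟩

lemma firstRight_eq {i : Fin n} {S : Finset (Fin n)} (h : S.Nonempty) {j : Fin n}
    (hjS : j ∈ S) (hmin : ∀ s ∈ S, cdistR i j ≤ cdistR i s) : firstRight i S h = j := by
  obtain ⟨hmem, hle⟩ := firstRight_spec i S h
  exact cdistR_inj i (le_antisymm (hle j hjS) (hmin _ hmem))

lemma firstLeft_eq {i : Fin n} {S : Finset (Fin n)} (h : S.Nonempty) {j : Fin n}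
    (hjS : j ∈ S) (hmin : ∀ s ∈ S, cdistL i j ≤ cdistL i s) : firstLeft i S h = j := by
  obtain ⟨hmem, hle⟩ := firstLeft_spec i S h
  exact cdistL_inj i (le_antisymm (hle j hjS) (hmin _ hmem))

lemma firstRight_congr {x : Fin n} {S S' : Finset (Fin n)} (hS : S = S')
    (h : S.Nonempty) (h' : S'.Nonempty) : firstRight x S h = firstRight x S' h' := by
  subst hS; rfl

lemma firstLeft_congr {x : Fin n} {S S' : Finset (Fin n)} (hS : S = S')
    (h : S.Nonempty) (h' : S'.Nonempty) : firstLeft x S h = firstLeft x S' h' := by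
  subst hS; rfl

/-- after erasing the common nearest free site, the next nearest free site is
again the same for the two starting points -/
lemma firstRight_erase_eq {x y j : Fin n} {S : Finset (Fin n)} (h : S.Nonempty)
    (hx : firstRight x S h = j) (hy : firstRight y S h = j)
    (h2 : (S.erase j).Nonempty) :
    firstRight x (S.erase j) h2 = firstRight y (S.erase j) h2 := by
  obtain ⟨hmem, hle⟩ := firstRight_spec x (S.erase j) h2
  apply (firstRight_eq h2 hmem _).symm
  intro s hs
  have hsS : s ∈ S := Finset.mem_of_mem_erase hs
  have hsj : s ≠ j := Finset.ne_of_mem_erase hs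
  have heS : firstRight x (S.erase j) h2 ∈ S := Finset.mem_of_mem_erase hmem
  have hej : firstRight x (S.erase j) h2 ≠ j := Finset.ne_of_mem_erase hmem
  have hxj : ∀ z ∈ S, cdistR x j ≤ cdistR x z := fun z hz => hx ▸ (firstRight_spec x S h).2 z hz
  have hyj : ∀ z ∈ S, cdistR y j ≤ cdistR y z := fun z hz => hy ▸ (firstRight_spec y S h).2 z hz
  have c1 : cdistR x s = cdistR x j + cdistR j s := cdistR_add hsj (hxj s hsS)
  have c2 : cdistR x _ = cdistR x j + cdistR j _ := cdistR_add hej (hxj _ heS)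
  have c3 : cdistR x (firstRight x (S.erase j) h2) ≤ cdistR x s := hle s hs
  have c4 : cdistR y s = cdistR y j + cdistR j s := cdistR_add hsj (hyj s hsS)
  have c5 : cdistR y _ = cdistR y j + cdistR j _ := cdistR_add hej (hyj _ heS)
  omega

lemma firstLeft_erase_eq {x y j : Fin n} {S : Finset (Fin n)} (h : S.Nonempty)
    (hx : firstLeft x S h = j) (hy : firstLeft y S h = j)
    (h2 : (S.erase j).Nonempty) :
    firstLeft x (S.erase j) h2 = firstLeft y (S.erase j) h2 := by
  obtain ⟨hmem, hle⟩ := firstLeft_spec x (S.erase j) h2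
  apply (firstLeft_eq h2 hmem _).symm
  intro s hs
  have hsS : s ∈ S := Finset.mem_of_mem_erase hs
  have hsj : s ≠ j := Finset.ne_of_mem_erase hs
  have heS : firstLeft x (S.erase j) h2 ∈ S := Finset.mem_of_mem_erase hmem
  have hej : firstLeft x (S.erase j) h2 ≠ j := Finset.ne_of_mem_erase hmem
  have hxj : ∀ z ∈ S, cdistL x j ≤ cdistL x z := fun z hz => hx ▸ (firstLeft_spec x S h).2 z hz
  have hyj : ∀ z ∈ S, cdistL y j ≤ cdistL y z := fun z hz => hy ▸ (firstLeft_spec y S h).2 z hz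
  have c1 : cdistL x s = cdistL x j + cdistL j s := cdistL_add hsj (hxj s hsS)
  have c2 : cdistL x _ = cdistL x j + cdistL j _ := cdistL_add hej (hxj _ heS)
  have c3 : cdistL x (firstLeft x (S.erase j) h2) ≤ cdistL x s := hle s hs
  have c4 : cdistL y s = cdistL y j + cdistL j s := cdistL_add hsj (hyj s hsS)
  have c5 : cdistL y _ = cdistL y j + cdistL j _ := cdistL_add hej (hyj _ heS)
  omega

/-- erasing a site other than the nearest free site does not change the nearest free site -/
lemma firstRight_erase_other {y j : Fin n} {S : Finset (Fin n)} (h : S.Nonempty)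
    (hj : j ∈ S) (hne : firstRight y S h ≠ j) (h2 : (S.erase j).Nonempty) :
    firstRight y (S.erase j) h2 = firstRight y S h := by
  apply firstRight_eq h2 (Finset.mem_erase.mpr ⟨hne, (firstRight_spec y S h).1⟩)
  exact fun s hs => (firstRight_spec y S h).2 s (Finset.mem_of_mem_erase hs)

lemma firstLeft_erase_other {y j : Fin n} {S : Finset (Fin n)} (h : S.Nonempty)
    (hj : j ∈ S) (hne : firstLeft y S h ≠ j) (h2 : (S.erase j).Nonempty) :
    firstLeft y (S.erase j) h2 = firstLeft y S h := by
  apply firstLeft_eq h2 (Finset.mem_erase.mpr ⟨hne, (firstLeft_spec y S h).1⟩)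
  exact fun s hs => (firstLeft_spec y S h).2 s (Finset.mem_of_mem_erase hs)

/-- Phase II step as a function of the starting site. -/
noncomputable def g2 (u : Word n) (st : Finset (Fin n) × Word n) (s : Fin n) :
    Finset (Fin n) × Word n :=
  if h : st.1.Nonempty then
    (st.1.erase (firstRight s st.1 h),
      Function.update st.2 (firstRight s st.1 h) (u s))
  else st

/-- Phase I step as a function of the starting site. -/
noncomputable def g1 (u : Word n) (st : Finset (Fin n) × Word n) (s : Fin n) :
    Finset (Fin n) × Word n :=
  if h : st.1.Nonempty then
    (st.1.erase (firstLeft s st.1 h),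
      Function.update st.2 (firstLeft s st.1 h) (u s + 1))
  else st

lemma step2_eq_g2 (u : Word n) (σ : Equiv.Perm (Fin n)) :
    step2 u σ = fun st p => g2 u st (σ p) := rfl

lemma step1_eq_g1 (u : Word n) (σ : Equiv.Perm (Fin n)) :
    step1 u σ = fun st p => g1 u st (σ p) := rfl

lemma g2_exchange (u : Word n) {x y : Fin n} (hxy : u x = u y)
    (st : Finset (Fin n) × Word n) :
    g2 u (g2 u st x) y = g2 u (g2 u st y) x := by
  by_cases h : st.1.Nonempty
  · have hx1 : g2 u st x = (st.1.erase (firstRight x st.1 h),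
        Function.update st.2 (firstRight x st.1 h) (u x)) := dif_pos h
    have hy1 : g2 u st y = (st.1.erase (firstRight y st.1 h),
        Function.update st.2 (firstRight y st.1 h) (u y)) := dif_pos h
    rw [hx1, hy1]
    by_cases h2 : (st.1.erase (firstRight x st.1 h)).Nonempty
    · have hcard : (st.1.erase (firstRight x st.1 h)).card
          = (st.1.erase (firstRight y st.1 h)).card := by
        rw [Finset.card_erase_of_mem (firstRight_spec x st.1 h).1,
          Finset.card_erase_of_mem (firstRight_spec y st.1 h).1]
      have h2' : (st.1.erase (firstRight y st.1 h)).Nonempty :=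
        Finset.card_pos.mp (by rw [← hcard]; exact Finset.card_pos.mpr h2)
      have e1 : g2 u (st.1.erase (firstRight x st.1 h),
            Function.update st.2 (firstRight x st.1 h) (u x)) y
          = ((st.1.erase (firstRight x st.1 h)).erase
                (firstRight y (st.1.erase (firstRight x st.1 h)) h2),
              Function.update (Function.update st.2 (firstRight x st.1 h) (u x))
                (firstRight y (st.1.erase (firstRight x st.1 h)) h2) (u y)) := dif_pos h2
      have e2 : g2 u (st.1.erase (firstRight y st.1 h),
            Function.update st.2 (firstRight y st.1 h) (u y)) x
          = ((st.1.erase (firstRight y st.1 h)).erase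
                (firstRight x (st.1.erase (firstRight y st.1 h)) h2'),
              Function.update (Function.update st.2 (firstRight y st.1 h) (u y))
                (firstRight x (st.1.erase (firstRight y st.1 h)) h2') (u x)) := dif_pos h2'
      rw [e1, e2]
      by_cases hj : firstRight x st.1 h = firstRight y st.1 h
      · -- same first target
        have hsec : firstRight y (st.1.erase (firstRight x st.1 h)) h2
            = firstRight x (st.1.erase (firstRight x st.1 h)) h2 :=
          (firstRight_erase_eq h rfl hj.symm h2).symm
        have hsec2 : firstRight x (st.1.erase (firstRight y st.1 h)) h2'
            = firstRight x (st.1.erase (firstRight x st.1 h)) h2 :=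
          firstRight_congr (by rw [hj]) h2' h2
        rw [hsec, hsec2, ← hj, hxy]
      · -- crossing
        have hc1 : firstRight y (st.1.erase (firstRight x st.1 h)) h2
            = firstRight y st.1 h :=
          firstRight_erase_other h (firstRight_spec x st.1 h).1 (fun hh => hj hh.symm) h2
        have hc2 : firstRight x (st.1.erase (firstRight y st.1 h)) h2'
            = firstRight x st.1 h :=
          firstRight_erase_other h (firstRight_spec y st.1 h).1 hj h2'
        rw [hc1, hc2, Finset.erase_right_comm,
          Function.update_comm hj (u x) (u y) st.2]
    · -- the free set was a singleton
      have huniq : ∀ a ∈ st.1, a = firstRight x st.1 h := by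
        intro a ha
        by_contra hne
        exact h2 ⟨a, Finset.mem_erase.mpr ⟨hne, ha⟩⟩
      have hyx : firstRight y st.1 h = firstRight x st.1 h :=
        huniq _ (firstRight_spec y st.1 h).1
      have h2y : ¬ (st.1.erase (firstRight y st.1 h)).Nonempty := by
        rw [hyx]; exact h2
      have ex : g2 u (st.1.erase (firstRight x st.1 h),
          Function.update st.2 (firstRight x st.1 h) (u x)) y
          = (st.1.erase (firstRight x st.1 h),
            Function.update st.2 (firstRight x st.1 h) (u x)) := dif_neg h2
      have ey : g2 u (st.1.erase (firstRight y st.1 h),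
          Function.update st.2 (firstRight y st.1 h) (u y)) x
          = (st.1.erase (firstRight y st.1 h),
            Function.update st.2 (firstRight y st.1 h) (u y)) := dif_neg h2y
      rw [ex, ey, hyx, hxy]
  · have e : g2 u st x = st := dif_neg h
    have e' : g2 u st y = st := dif_neg h
    rw [e, e', e]

lemma g1_exchange (u : Word n) {x y : Fin n} (hxy : u x = u y)
    (st : Finset (Fin n) × Word n) :
    g1 u (g1 u st x) y = g1 u (g1 u st y) x := by
  by_cases h : st.1.Nonempty
  · have hx1 : g1 u st x = (st.1.erase (firstLeft x st.1 h),
        Function.update st.2 (firstLeft x st.1 h) (u x + 1)) := dif_pos h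
    have hy1 : g1 u st y = (st.1.erase (firstLeft y st.1 h),
        Function.update st.2 (firstLeft y st.1 h) (u y + 1)) := dif_pos h
    rw [hx1, hy1]
    by_cases h2 : (st.1.erase (firstLeft x st.1 h)).Nonempty
    · have hcard : (st.1.erase (firstLeft x st.1 h)).card
          = (st.1.erase (firstLeft y st.1 h)).card := by
        rw [Finset.card_erase_of_mem (firstLeft_spec x st.1 h).1,
          Finset.card_erase_of_mem (firstLeft_spec y st.1 h).1]
      have h2' : (st.1.erase (firstLeft y st.1 h)).Nonempty :=
        Finset.card_pos.mp (by rw [← hcard]; exact Finset.card_pos.mpr h2)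
      have e1 : g1 u (st.1.erase (firstLeft x st.1 h),
            Function.update st.2 (firstLeft x st.1 h) (u x + 1)) y
          = ((st.1.erase (firstLeft x st.1 h)).erase
                (firstLeft y (st.1.erase (firstLeft x st.1 h)) h2),
              Function.update (Function.update st.2 (firstLeft x st.1 h) (u x + 1))
                (firstLeft y (st.1.erase (firstLeft x st.1 h)) h2) (u y + 1)) := dif_pos h2
      have e2 : g1 u (st.1.erase (firstLeft y st.1 h),
            Function.update st.2 (firstLeft y st.1 h) (u y + 1)) x
          = ((st.1.erase (firstLeft y st.1 h)).erase
                (firstLeft x (st.1.erase (firstLeft y st.1 h)) h2'),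
              Function.update (Function.update st.2 (firstLeft y st.1 h) (u y + 1))
                (firstLeft x (st.1.erase (firstLeft y st.1 h)) h2') (u x + 1)) := dif_pos h2'
      rw [e1, e2]
      by_cases hj : firstLeft x st.1 h = firstLeft y st.1 h
      · have hsec : firstLeft y (st.1.erase (firstLeft x st.1 h)) h2
            = firstLeft x (st.1.erase (firstLeft x st.1 h)) h2 :=
          (firstLeft_erase_eq h rfl hj.symm h2).symm
        have hsec2 : firstLeft x (st.1.erase (firstLeft y st.1 h)) h2'
            = firstLeft x (st.1.erase (firstLeft x st.1 h)) h2 :=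
          firstLeft_congr (by rw [hj]) h2' h2
        rw [hsec, hsec2, ← hj, hxy]
      · have hc1 : firstLeft y (st.1.erase (firstLeft x st.1 h)) h2
            = firstLeft y st.1 h :=
          firstLeft_erase_other h (firstLeft_spec x st.1 h).1 (fun hh => hj hh.symm) h2
        have hc2 : firstLeft x (st.1.erase (firstLeft y st.1 h)) h2'
            = firstLeft x st.1 h :=
          firstLeft_erase_other h (firstLeft_spec y st.1 h).1 hj h2'
        rw [hc1, hc2, Finset.erase_right_comm,
          Function.update_comm hj (u x + 1) (u y + 1) st.2]
    · have huniq : ∀ a ∈ st.1, a = firstLeft x st.1 h := by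
        intro a ha
        by_contra hne
        exact h2 ⟨a, Finset.mem_erase.mpr ⟨hne, ha⟩⟩
      have hyx : firstLeft y st.1 h = firstLeft x st.1 h :=
        huniq _ (firstLeft_spec y st.1 h).1
      have h2y : ¬ (st.1.erase (firstLeft y st.1 h)).Nonempty := by
        rw [hyx]; exact h2
      have ex : g1 u (st.1.erase (firstLeft x st.1 h),
          Function.update st.2 (firstLeft x st.1 h) (u x + 1)) y
          = (st.1.erase (firstLeft x st.1 h),
            Function.update st.2 (firstLeft x st.1 h) (u x + 1)) := dif_neg h2
      have ey : g1 u (st.1.erase (firstLeft y st.1 h),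
          Function.update st.2 (firstLeft y st.1 h) (u y + 1)) x
          = (st.1.erase (firstLeft y st.1 h),
            Function.update st.2 (firstLeft y st.1 h) (u y + 1)) := dif_neg h2y
      rw [ex, ey, hyx, hxy]
  · have e : g1 u st x = st := dif_neg h
    have e' : g1 u st y = st := dif_neg h
    rw [e, e', e]

lemma g2_card (u : Word n) (st : Finset (Fin n) × Word n) (s : Fin n) :
    (g2 u st s).1.card = st.1.card - 1 := by
  by_cases h : st.1.Nonempty
  · rw [show g2 u st s = _ from dif_pos h]
    exact Finset.card_erase_of_mem (firstRight_spec s st.1 h).1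
  · rw [show g2 u st s = st from dif_neg h]
    rw [Finset.not_nonempty_iff_eq_empty] at h
    simp [h]

lemma g1_card (u : Word n) (st : Finset (Fin n) × Word n) (s : Fin n) :
    (g1 u st s).1.card = st.1.card - 1 := by
  by_cases h : st.1.Nonempty
  · rw [show g1 u st s = _ from dif_pos h]
    exact Finset.card_erase_of_mem (firstLeft_spec s st.1 h).1
  · rw [show g1 u st s = st from dif_neg h]
    rw [Finset.not_nonempty_iff_eq_empty] at h
    simp [h]

lemma foldl_g2_card (u : Word n) :
    ∀ (L : List (Fin n)) (st : Finset (Fin n) × Word n),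
      (L.foldl (g2 u) st).1.card = st.1.card - L.length := by
  intro L
  induction L with
  | nil => intro st; simp
  | cons a L ih =>
    intro st
    rw [List.foldl_cons, ih, g2_card]
    simp only [List.length_cons]
    omega

lemma foldl_g1_card (u : Word n) :
    ∀ (L : List (Fin n)) (st : Finset (Fin n) × Word n),
      (L.foldl (g1 u) st).1.card = st.1.card - L.length := by
  intro L
  induction L with
  | nil => intro st; simp
  | cons a L ih =>
    intro st
    rw [List.foldl_cons, ih, g1_card]
    simp only [List.length_cons]
    omega

lemma g2_singleton (u : Word n) {x y : Fin n} (hxy : u x = u y)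
    (st : Finset (Fin n) × Word n) (hcard : st.1.card = 1) :
    g2 u st x = g2 u st y := by
  have h : st.1.Nonempty := Finset.card_pos.mp (by omega)
  have heq : firstRight x st.1 h = firstRight y st.1 h :=
    Finset.card_le_one.mp (le_of_eq hcard) _ (firstRight_spec x st.1 h).1
      _ (firstRight_spec y st.1 h).1
  rw [show g2 u st x = _ from dif_pos h, show g2 u st y = _ from dif_pos h, heq, hxy]

lemma g1_singleton (u : Word n) {x y : Fin n} (hxy : u x = u y)
    (st : Finset (Fin n) × Word n) (hcard : st.1.card = 1) :
    g1 u st x = g1 u st y := by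
  have h : st.1.Nonempty := Finset.card_pos.mp (by omega)
  have heq : firstLeft x st.1 h = firstLeft y st.1 h :=
    Finset.card_le_one.mp (le_of_eq hcard) _ (firstLeft_spec x st.1 h).1
      _ (firstLeft_spec y st.1 h).1
  rw [show g1 u st x = _ from dif_pos h, show g1 u st y = _ from dif_pos h, heq, hxy]

/-- the queue algorithm as a function of the (sorted) listing of all sites -/
noncomputable def Fq (q : Finset (Fin n)) (u : Word n) (C : List (Fin n)) : Word n :=
  (((C.drop q.card).reverse).foldl (g1 u)
    (qᶜ, ((C.take q.card).foldl (g2 u)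
      ((q, fun _ => 0) : Finset (Fin n) × Word n)).2)).2

lemma Fq_swap (q : Finset (Fin n)) (u : Word n) (l1 l2 : List (Fin n)) (x y : Fin n)
    (hxy : u x = u y) (hlen : l1.length + l2.length + 2 = n) :
    Fq q u (l1 ++ x :: y :: l2) = Fq q u (l1 ++ y :: x :: l2) := by
  have hk : q.card ≤ n := by
    have := Finset.card_le_univ q
    simpa using this
  rcases lt_trichotomy q.card (l1.length + 1) with hc | hc | hc
  · -- swap entirely inside phase I
    have hkm : q.card ≤ l1.length := by omega
    have ht : ∀ r : List (Fin n), (l1 ++ r).take q.card = l1.take q.card := by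
      intro r
      rw [List.take_append, Nat.sub_eq_zero_of_le hkm, List.take_zero,
        List.append_nil]
    have hd : ∀ r : List (Fin n), (l1 ++ r).drop q.card = l1.drop q.card ++ r := by
      intro r
      rw [List.drop_append, Nat.sub_eq_zero_of_le hkm, List.drop_zero]
    unfold Fq
    rw [ht, ht, hd, hd,
      show (l1.drop q.card ++ x :: y :: l2).reverse
        = l2.reverse ++ y :: x :: (l1.drop q.card).reverse by simp,
      show (l1.drop q.card ++ y :: x :: l2).reverse
        = l2.reverse ++ x :: y :: (l1.drop q.card).reverse by simp]
    apply congrArg Prod.snd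
    simp only [List.foldl_append, List.foldl_cons]
    rw [g1_exchange u hxy]
  · -- swap straddling the boundary between the phases
    have ht : ∀ a b : Fin n, (l1 ++ a :: b :: l2).take q.card = l1 ++ [a] := by
      intro a b
      rw [List.take_append, List.take_of_length_le (by omega),
        show q.card - l1.length = 1 by omega]
      rfl
    have hd : ∀ a b : Fin n, (l1 ++ a :: b :: l2).drop q.card = b :: l2 := by
      intro a b
      rw [List.drop_append, List.drop_eq_nil_of_le (by omega),
        show q.card - l1.length = 1 by omega]
      rfl
    have hst : (l1 ++ [x]).foldl (g2 u) ((q, fun _ => 0) : Finset (Fin n) × Word n)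
        = (l1 ++ [y]).foldl (g2 u) ((q, fun _ => 0) : Finset (Fin n) × Word n) := by
      simp only [List.foldl_append, List.foldl_cons, List.foldl_nil]
      apply g2_singleton u hxy
      rw [foldl_g2_card]
      show q.card - l1.length = 1
      omega
    unfold Fq
    rw [ht x y, ht y x, hd x y, hd y x, hst,
      show ((y : Fin n) :: l2).reverse = l2.reverse ++ [y] by simp,
      show ((x : Fin n) :: l2).reverse = l2.reverse ++ [x] by simp]
    apply congrArg Prod.snd
    simp only [List.foldl_append, List.foldl_cons, List.foldl_nil]
    apply g1_singleton u hxy.symm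
    rw [foldl_g1_card]
    show (qᶜ : Finset (Fin n)).card - l2.reverse.length = 1
    rw [Finset.card_compl, List.length_reverse]
    simp only [Fintype.card_fin]
    omega
  · -- swap entirely inside phase II
    obtain ⟨j, hj⟩ : ∃ j, q.card - l1.length = (j + 1) + 1 :=
      ⟨q.card - l1.length - 2, by omega⟩
    have ht : ∀ a b : Fin n, (l1 ++ a :: b :: l2).take q.card
        = l1 ++ a :: b :: l2.take j := by
      intro a b
      rw [List.take_append, List.take_of_length_le (by omega), hj,
        List.take_succ_cons, List.take_succ_cons]
    have hd : ∀ a b : Fin n, (l1 ++ a :: b :: l2).drop q.card = l2.drop j := by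
      intro a b
      rw [List.drop_append, List.drop_eq_nil_of_le (by omega), hj,
        List.drop_succ_cons, List.drop_succ_cons, List.nil_append]
    have h2 : (l1 ++ x :: y :: l2.take j).foldl (g2 u)
          ((q, fun _ => 0) : Finset (Fin n) × Word n)
        = (l1 ++ y :: x :: l2.take j).foldl (g2 u)
          ((q, fun _ => 0) : Finset (Fin n) × Word n) := by
      simp only [List.foldl_append, List.foldl_cons]
      rw [g2_exchange u hxy]
    unfold Fq
    rw [ht x y, ht y x, hd x y, hd y x, h2]

/-- fold-type invariance: a function invariant under adjacent transpositions of
equal letters takes the same value on any two sorted listings that are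
permutations of each other. -/
lemma sorted_perm_invariant (u : Word n) :
    ∀ (N M : ℕ) (F : List (Fin n) → Word n),
      (∀ (l1 l2 : List (Fin n)) (x y : Fin n), u x = u y →
        l1.length + l2.length + 2 = M →
        F (l1 ++ x :: y :: l2) = F (l1 ++ y :: x :: l2)) →
      ∀ (C C' : List (Fin n)), C.length ≤ N → C.length = M → C.Perm C' →
        C.Pairwise (fun p q => u p ≤ u q) → C'.Pairwise (fun p q => u p ≤ u q) →
        F C = F C' := by
  intro N
  induction N with
  | zero =>
    intro M F hF C C' hN hM hp h1 h2
    have hC : C = [] := List.length_eq_zero_iff.mp (Nat.le_zero.mp hN)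
    subst hC
    have hC' : C' = [] := hp.symm.eq_nil
    rw [hC']
  | succ N ih =>
    intro M F hF C C' hN hM hp h1 h2
    cases C with
    | nil =>
      have hC' : C' = [] := hp.symm.eq_nil
      rw [hC']
    | cons x t =>
      cases C' with
      | nil => exact absurd hp.eq_nil (by simp)
      | cons x' t' =>
        have hlt : t.length = t'.length := by
          have := hp.length_eq
          simpa using this
        have hM1 : 1 ≤ M := by
          simp only [List.length_cons] at hM
          omega
        have hF1 : ∀ (z : Fin n) (l1 l2 : List (Fin n)) (a b : Fin n), u a = u b →
            l1.length + l2.length + 2 = M - 1 →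
            F (z :: (l1 ++ a :: b :: l2)) = F (z :: (l1 ++ b :: a :: l2)) := by
          intro z l1 l2 a b hab hl
          have := hF (z :: l1) l2 a b hab (by simp only [List.length_cons]; omega)
          simpa using this
        by_cases hxx : x = x'
        · subst hxx
          have := ih (M - 1) (fun l => F (x :: l)) (hF1 x) t t'
            (by simp only [List.length_cons] at hN; omega)
            (by simp only [List.length_cons] at hM; omega)
            hp.cons_inv h1.of_cons h2.of_cons
          simpa using this
        · have hx'm : x' ∈ t := by
            have hmem : x' ∈ x :: t := hp.symm.subset List.mem_cons_self
            rcases List.mem_cons.mp hmem with h | h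
            · exact absurd h.symm hxx
            · exact h
          have hxt' : x ∈ t' := by
            have hmem : x ∈ x' :: t' := hp.subset List.mem_cons_self
            rcases List.mem_cons.mp hmem with h | h
            · exact absurd h hxx
            · exact h
          have hux : u x = u x' :=
            le_antisymm (List.rel_of_pairwise_cons h1 hx'm)
              (List.rel_of_pairwise_cons h2 hxt')
          have herase : (t'.erase x).Pairwise (fun p q => u p ≤ u q) :=
            List.Pairwise.sublist List.erase_sublist h2.of_cons
          have s1 : (x' :: t'.erase x).Pairwise (fun p q => u p ≤ u q) :=
            List.pairwise_cons.mpr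
              ⟨fun z hz => List.rel_of_pairwise_cons h2 (List.mem_of_mem_erase hz), herase⟩
          have s2 : (x :: t'.erase x).Pairwise (fun p q => u p ≤ u q) :=
            List.pairwise_cons.mpr
              ⟨fun z hz => le_trans (le_of_eq hux)
                (List.rel_of_pairwise_cons h2 (List.mem_of_mem_erase hz)), herase⟩
          have p0 : t'.Perm (x :: t'.erase x) := List.perm_cons_erase hxt'
          have p1 : t.Perm (x' :: t'.erase x) := by
            have hp3 : (x :: t).Perm (x' :: x :: t'.erase x) := hp.trans (p0.cons x')
            have hp4 : (x' :: x :: t'.erase x).Perm (x :: x' :: t'.erase x) :=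
              List.Perm.swap x x' _
            exact (hp3.trans hp4).cons_inv
          have hle : (t'.erase x).length = t'.length - 1 := List.length_erase_of_mem hxt'
          have ht'1 : 1 ≤ t'.length := List.length_pos_iff.mpr (List.ne_nil_of_mem hxt')
          have c1 : F (x :: t) = F (x :: (x' :: t'.erase x)) := by
            have := ih (M - 1) (fun l => F (x :: l)) (hF1 x) t (x' :: t'.erase x)
              (by simp only [List.length_cons] at hN; omega)
              (by simp only [List.length_cons] at hM; omega)
              p1 h1.of_cons s1
            simpa using this
          have c2 : F (x :: x' :: t'.erase x) = F (x' :: x :: t'.erase x) := by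
            have := hF [] (t'.erase x) x x' hux
              (by simp only [List.length_nil, List.length_cons] at hM ⊢; omega)
            simpa using this
          have c3 : F (x' :: (x :: t'.erase x)) = F (x' :: t') := by
            have := ih (M - 1) (fun l => F (x' :: l)) (hF1 x') (x :: t'.erase x) t'
              (by simp only [List.length_cons] at hN ⊢; omega)
              (by simp only [List.length_cons] at hM ⊢; omega)
              p0.symm s2 h2.of_cons
            simpa using this
          calc F (x :: t) = F (x :: (x' :: t'.erase x)) := c1
            _ = F (x' :: x :: t'.erase x) := c2
            _ = F (x' :: t') := c3

lemma queueActWith_eq_Fq (q : Finset (Fin n)) (u : Word n) (ρ : Equiv.Perm (Fin n)) :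
    queueActWith q ρ u = Fq q u ((List.finRange n).map ρ) := by
  unfold queueActWith Fq
  rw [← List.map_take, ← List.map_drop, ← List.map_reverse,
    List.foldl_map, List.foldl_map]
  rfl

lemma sorted_map_sorting (u : Word n) (ρ : Equiv.Perm (Fin n)) (hρ : IsSorting u ρ) :
    ((List.finRange n).map ρ).Pairwise (fun p q => u p ≤ u q) := by
  rw [List.pairwise_map]
  exact (List.pairwise_lt_finRange n).imp (fun h => hρ h.le)

lemma map_finRange_perm (ρ : Equiv.Perm (Fin n)) :
    ((List.finRange n).map ρ).Perm (List.finRange n) := by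
  apply List.perm_of_nodup_nodup_toFinset_eq
    ((List.nodup_finRange n).map ρ.injective) (List.nodup_finRange n)
  ext b
  simp only [List.mem_toFinset, List.mem_map, List.mem_finRange, true_and]
  exact iff_of_true ⟨ρ.symm b, by simp⟩ trivial

end OrderIndependent

/-- The outcome of the two-phase queue algorithm does not depend on the choice of the
ordering permutation, as long as it sorts the letters of `u` weakly increasingly. -/
theorem queue_act_order_independent {n : ℕ} [NeZero n] (q : Finset (Fin n)) (u : Word n)
    (σ τ : Equiv.Perm (Fin n)) (hσ : IsSorting u σ) (hτ : IsSorting u τ) :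
    queueActWith q σ u = queueActWith q τ u := by
  rw [queueActWith_eq_Fq q u σ, queueActWith_eq_Fq q u τ]
  exact sorted_perm_invariant u n n (Fq q u)
    (fun l1 l2 x y hxy hl => Fq_swap q u l1 l2 x y hxy hl)
    _ _ (by simp) (by simp)
    ((map_finRange_perm σ).trans (map_finRange_perm τ).symm)
    (sorted_map_sorting u σ hσ) (sorted_map_sorting u τ hτ)

end MLQ
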